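/- Fix ε > 0, γ ∈ (0,1], and real constants R ≥ 0, V ≥ 0 with R + V > 0, and define f : (0,1) → ℝ by f(α) = log((1−α)·ε·γ / (R + (1+α)·V)) / log(α·γ). Then f is strictly increasing on the set of all α ∈ (0,1) satisfying (1−α)·ε·γ ≤ R + (1+α)·V: for all α₁ < α₂ in (0,1) with (1−α₁)·ε·γ ≤ R + (1+α₁)·V, one has f(α₁) < f(α₂). -/
import Mathlib


theorem stmt10 (ε γ R V : ℝ) (hε : 0 < ε) (hγ0 : 0 < γ) (hγ1 : γ ≤ 1)
    (hR : 0 ≤ R) (hV : 0 ≤ V) (hRV : 0 < R + V) :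
    ∀ α₁ α₂ : ℝ, 0 < α₁ → α₁ < α₂ → α₂ < 1 →
      (1 - α₁) * ε * γ ≤ R + (1 + α₁) * V →
      Real.log ((1 - α₁) * ε * γ / (R + (1 + α₁) * V)) / Real.log (α₁ * γ) <
      Real.log ((1 - α₂) * ε * γ / (R + (1 + α₂) * V)) / Real.log (α₂ * γ) := by
  intro α₁ α₂ h1 h12 h2 hc
  have hα₂0 : 0 < α₂ := h1.trans h12
  have hα₁1 : α₁ < 1 := h12.trans h2
  have hN1 : 0 < (1 - α₁) * ε * γ := by
    have : 0 < 1 - α₁ := by linarith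
    positivity
  have hN2 : 0 < (1 - α₂) * ε * γ := by
    have : 0 < 1 - α₂ := by linarith
    positivity
  have hD1 : 0 < R + (1 + α₁) * V := by nlinarith [mul_nonneg h1.le hV]
  have hD2 : 0 < R + (1 + α₂) * V := by nlinarith [mul_nonneg hα₂0.le hV]
  have hD12 : R + (1 + α₁) * V ≤ R + (1 + α₂) * V := by nlinarith
  have hlog1 : Real.log (α₁ * γ) < 0 :=
    Real.log_neg (mul_pos h1 hγ0) (by nlinarith)
  have hlogs : Real.log (α₁ * γ) < Real.log (α₂ * γ) :=
    Real.log_lt_log (mul_pos h1 hγ0) (by nlinarith)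
  have hlog2 : Real.log (α₂ * γ) < 0 :=
    Real.log_neg (mul_pos hα₂0 hγ0) (by nlinarith)
  set L₁ := Real.log ((1 - α₁) * ε * γ / (R + (1 + α₁) * V)) with hL₁def
  set L₂ := Real.log ((1 - α₂) * ε * γ / (R + (1 + α₂) * V)) with hL₂def
  have hL1 : L₁ ≤ 0 :=
    Real.log_nonpos (by positivity) ((div_le_one hD1).mpr hc)
  have hratio : (1 - α₂) * ε * γ / (R + (1 + α₂) * V)
      < (1 - α₁) * ε * γ / (R + (1 + α₁) * V) := by
    rw [div_lt_div_iff₀ hD2 hD1]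
    nlinarith [mul_lt_mul_of_pos_right (show (1-α₂)*ε*γ < (1-α₁)*ε*γ by nlinarith)
      hD1, mul_le_mul_of_nonneg_left hD12 hN2.le]
  have hL21 : L₂ < L₁ := Real.log_lt_log (by positivity) hratio
  have key : (-L₁) / (-Real.log (α₁ * γ)) < (-L₂) / (-Real.log (α₂ * γ)) := by
    have h1' : (0:ℝ) < -Real.log (α₁ * γ) := by linarith
    have h2' : (0:ℝ) < -Real.log (α₂ * γ) := by linarith
    calc (-L₁) / (-Real.log (α₁ * γ)) ≤ (-L₂) / (-Real.log (α₁ * γ)) := by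
          have : -L₁ ≤ -L₂ := by linarith
          gcongr
        _ < (-L₂) / (-Real.log (α₂ * γ)) := by
          apply div_lt_div_of_pos_left (by linarith) h2' (by linarith)
  simpa [neg_div_neg_eq] using key
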